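/- Let d be a digraphic integer-pair sequence and let C = {u,v,w} be three distinct vertices such that every realization G ∈ R(d) induces a directed 3-cycle on C. Define the map σ : R(d) → R(d) that sends each realization G to the realization σ(G) obtained by reorienting the induced directed 3-cycle on C (reversing its three arcs). Then σ is a well-defined involution on R(d), and σ is an automorphism of the 2-switch meta-graph Ω'_d: realizations G and H differ by a single 2-switch if and only if σ(G) and σ(H) differ by a single 2-switch. Consequently σ is a graph isomorphism between the connected component of Ω'_d containing G and the connected component containing σ(G), and these two components are disjoint. -/

import Mathlib

/-- A simple directed graph on vertex set `V`: an irreflexive (Boolean) arc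
relation, i.e. no self-loops and at most one arc in each direction. -/
structure SDigraph (V : Type) where
  Adj : V → V → Bool
  irrefl : ∀ v, Adj v v = false

/-- Out-degree of a vertex. -/
def SDigraph.outDeg {V : Type} [Fintype V] [DecidableEq V]
    (G : SDigraph V) (v : V) : ℕ :=
  (Finset.univ.filter fun x => G.Adj v x = true).card

/-- In-degree of a vertex. -/
def SDigraph.inDeg {V : Type} [Fintype V] [DecidableEq V]
    (G : SDigraph V) (v : V) : ℕ :=
  (Finset.univ.filter fun x => G.Adj x v = true).card

/-- `G` realizes the integer-pair (degree) sequence `d`: vertex `v` has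
out-degree `(d v).1` and in-degree `(d v).2`. -/
def Realizes {V : Type} [Fintype V] [DecidableEq V]
    (G : SDigraph V) (d : V → ℕ × ℕ) : Prop :=
  ∀ v, G.outDeg v = (d v).1 ∧ G.inDeg v = (d v).2

/-- `H` is obtained from `G` by a single 2-switch: arcs `(v₁,v₂)`, `(v₃,v₄)`
are replaced by `(v₁,v₄)`, `(v₃,v₂)`, allowed only when the four vertices
are distinct, the former two are arcs and the latter two are not. -/
def TwoSwitch {V : Type} [DecidableEq V] (G H : SDigraph V) : Prop :=
  ∃ v₁ v₂ v₃ v₄ : V,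
    v₁ ≠ v₂ ∧ v₁ ≠ v₃ ∧ v₁ ≠ v₄ ∧ v₂ ≠ v₃ ∧ v₂ ≠ v₄ ∧ v₃ ≠ v₄ ∧
    G.Adj v₁ v₂ = true ∧ G.Adj v₃ v₄ = true ∧
    G.Adj v₁ v₄ = false ∧ G.Adj v₃ v₂ = false ∧
    ∀ x y, H.Adj x y =
      if (x = v₁ ∧ y = v₂) ∨ (x = v₃ ∧ y = v₄) then false
      else if (x = v₁ ∧ y = v₄) ∨ (x = v₃ ∧ y = v₂) then true
      else G.Adj x y

/-- `G` and `H` differ by a single 2-switch (in either direction). -/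
def TwoSwitchStep {V : Type} [DecidableEq V] (G H : SDigraph V) : Prop :=
  TwoSwitch G H ∨ TwoSwitch H G

/-- `H` is reachable from `G` by a finite sequence of 2-switches. -/
def Reach2 {V : Type} [DecidableEq V] (G H : SDigraph V) : Prop :=
  Relation.ReflTransGen TwoSwitchStep G H

/-- `H` is obtained from `G` by reorienting an induced directed 3-cycle:
there are distinct `u v w` with arcs `(u,v),(v,w),(w,u)` and no arcs
`(v,u),(w,v),(u,w)`, and `H` replaces these three arcs by the reversed ones. -/
def CycleReorient {V : Type} [DecidableEq V] (G H : SDigraph V) : Prop :=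
  ∃ u v w : V, u ≠ v ∧ v ≠ w ∧ u ≠ w ∧
    G.Adj u v = true ∧ G.Adj v w = true ∧ G.Adj w u = true ∧
    G.Adj v u = false ∧ G.Adj w v = false ∧ G.Adj u w = false ∧
    ∀ x y, H.Adj x y =
      if (x = u ∨ x = v ∨ x = w) ∧ (y = u ∨ y = v ∨ y = w) then G.Adj y x
      else G.Adj x y

/-- The three vertices `u, v, w` induce a directed 3-cycle in `G`: the induced
subgraph on them consists of exactly the three arcs of one cyclic orientation. -/
def InducesC3 {V : Type} (G : SDigraph V) (u v w : V) : Prop :=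
  (G.Adj u v = true ∧ G.Adj v w = true ∧ G.Adj w u = true ∧
    G.Adj v u = false ∧ G.Adj w v = false ∧ G.Adj u w = false) ∨
  (G.Adj v u = true ∧ G.Adj w v = true ∧ G.Adj u w = true ∧
    G.Adj u v = false ∧ G.Adj v w = false ∧ G.Adj w u = false)

/-- The digraph obtained from `G` by reversing all arcs among `{u, v, w}`
(and leaving all other arcs unchanged).  When `{u,v,w}` induces a directed
3-cycle in `G`, this is exactly the reorientation of that 3-cycle. -/
def flip3 {V : Type} [DecidableEq V] (G : SDigraph V) (u v w : V) : SDigraph V where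
  Adj x y :=
    if (x = u ∨ x = v ∨ x = w) ∧ (y = u ∨ y = v ∨ y = w) then G.Adj y x
    else G.Adj x y
  irrefl := by
    intro x
    try simp only []
    rw [ite_self]
    exact G.irrefl x


section Aux

variable {V : Type}

lemma adjflip [DecidableEq V] (G : SDigraph V) (u v w x y : V) :
    (flip3 G u v w).Adj x y =
      if (x = u ∨ x = v ∨ x = w) ∧ (y = u ∨ y = v ∨ y = w) then G.Adj y x
      else G.Adj x y := rfl

lemma SDigraph.ext' {G H : SDigraph V} (h : ∀ x y, G.Adj x y = H.Adj x y) : G = H := by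
  cases G; cases H
  congr 1
  funext x y; exact h x y

lemma flip3_comm [DecidableEq V] (G : SDigraph V) (u v w : V) :
    flip3 G u v w = flip3 G u w v := by
  apply SDigraph.ext'
  intro x y
  rw [adjflip, adjflip]
  by_cases h : (x = u ∨ x = v ∨ x = w) ∧ (y = u ∨ y = v ∨ y = w)
  · rw [if_pos h, if_pos (by tauto)]
  · rw [if_neg h, if_neg (by tauto)]

lemma flip3_flip3 [DecidableEq V] (G : SDigraph V) (u v w : V) :
    flip3 (flip3 G u v w) u v w = G := by
  apply SDigraph.ext'
  intro x y
  rw [adjflip, adjflip, adjflip]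
  by_cases h : (x = u ∨ x = v ∨ x = w) ∧ (y = u ∨ y = v ∨ y = w)
  · rw [if_pos h, if_pos ⟨h.2, h.1⟩]
  · rw [if_neg h, if_neg h]

lemma card_filter_update [Fintype V] [DecidableEq V]
    (p q : V → Bool) (a b : V) (hab : a ≠ b)
    (hpa : p a = true) (hpb : p b = false)
    (hq : ∀ x, q x = if x = a then false else if x = b then true else p x) :
    (Finset.univ.filter fun x => q x = true).card
      = (Finset.univ.filter fun x => p x = true).card := by
  have hset : (Finset.univ.filter fun x => q x = true)
      = insert b ((Finset.univ.filter fun x => p x = true).erase a) := by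
    ext x
    simp only [Finset.mem_insert, Finset.mem_erase, Finset.mem_filter, Finset.mem_univ,
      true_and, hq x]
    by_cases hxa : x = a <;> by_cases hxb : x = b <;> simp_all
  rw [hset, Finset.card_insert_of_notMem (by simp [hpb]),
    Finset.card_erase_of_mem (by simp [hpa])]
  have : a ∈ Finset.univ.filter fun x => p x = true := by simp [hpa]
  have hpos := Finset.card_pos.mpr ⟨a, this⟩
  omega

lemma twoSwitch_symm [DecidableEq V] {G H : SDigraph V} (h : TwoSwitch G H) :
    TwoSwitch H G := by
  obtain ⟨v₁, v₂, v₃, v₄, h12, h13, h14, h23, h24, h34, hA, hB, hC, hD, hf⟩ := h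
  have hHv12 : H.Adj v₁ v₂ = false := by rw [hf]; simp
  have hHv34 : H.Adj v₃ v₄ = false := by rw [hf]; simp
  have hHv14 : H.Adj v₁ v₄ = true := by
    rw [hf]; simp [h13, Ne.symm h24]
  have hHv32 : H.Adj v₃ v₂ = true := by
    rw [hf]; simp [Ne.symm h13, h24]
  refine ⟨v₁, v₄, v₃, v₂, h14, h13, h12, Ne.symm h34, Ne.symm h24, Ne.symm h23,
    hHv14, hHv32, hHv12, hHv34, ?_⟩
  intro x y
  by_cases c1 : (x = v₁ ∧ y = v₄) ∨ (x = v₃ ∧ y = v₂)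
  · rw [if_pos c1]
    rcases c1 with ⟨rfl, rfl⟩ | ⟨rfl, rfl⟩
    · exact hC
    · exact hD
  · rw [if_neg c1]
    by_cases c2 : (x = v₁ ∧ y = v₂) ∨ (x = v₃ ∧ y = v₄)
    · rw [if_pos c2]
      rcases c2 with ⟨rfl, rfl⟩ | ⟨rfl, rfl⟩
      · exact hA
      · exact hB
    · rw [if_neg c2, hf x y, if_neg c2, if_neg c1]

lemma twoSwitch_degs [Fintype V] [DecidableEq V] {G H : SDigraph V} (h : TwoSwitch G H) :
    ∀ t, H.outDeg t = G.outDeg t ∧ H.inDeg t = G.inDeg t := by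
  obtain ⟨v₁, v₂, v₃, v₄, h12, h13, h14, h23, h24, h34, hA, hB, hC, hD, hf⟩ := h
  intro t
  constructor
  · by_cases ht1 : t = v₁
    · subst ht1
      exact card_filter_update _ _ v₂ v₄ h24 hA hC
        (fun x => by rw [hf]; simp [h13])
    · by_cases ht3 : t = v₃
      · subst ht3
        exact card_filter_update _ _ v₄ v₂ (Ne.symm h24) hB hD
          (fun x => by rw [hf]; simp [Ne.symm h13])
      · have heq : ∀ x, H.Adj t x = G.Adj t x := fun x => by
          rw [hf]; simp [ht1, ht3]
        simp only [SDigraph.outDeg, heq]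
  · by_cases ht2 : t = v₂
    · subst ht2
      exact card_filter_update _ _ v₁ v₃ h13 hA hD
        (fun x => by rw [hf]; simp [h24])
    · by_cases ht4 : t = v₄
      · subst ht4
        exact card_filter_update _ _ v₃ v₁ (Ne.symm h13) hB hC
          (fun x => by rw [hf]; simp [Ne.symm h24])
      · have heq : ∀ x, H.Adj x t = G.Adj x t := fun x => by
          rw [hf]; simp [ht2, ht4]
        simp only [SDigraph.inDeg, heq]

lemma twoSwitch_realizes [Fintype V] [DecidableEq V] {G H : SDigraph V} {d : V → ℕ × ℕ}
    (h : TwoSwitch G H) (hG : Realizes G d) : Realizes H d := by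
  intro t
  obtain ⟨h1, h2⟩ := twoSwitch_degs h t
  exact ⟨h1.trans (hG t).1, h2.trans (hG t).2⟩

lemma flip3_degs_aux [Fintype V] [DecidableEq V] (G : SDigraph V) (a b c : V)
    (hab : a ≠ b) (hbc : b ≠ c) (hac : a ≠ c)
    (g1 : G.Adj a b = true) (g2 : G.Adj b c = true) (g3 : G.Adj c a = true)
    (g4 : G.Adj b a = false) (g5 : G.Adj c b = false) (g6 : G.Adj a c = false) :
    ∀ t, (flip3 G a b c).outDeg t = G.outDeg t ∧ (flip3 G a b c).inDeg t = G.inDeg t := by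
  intro t
  have irr := G.irrefl
  by_cases hta : t = a
  · subst hta
    constructor
    · exact card_filter_update _ _ b c hbc g1 g6
        (fun x => by
          rw [adjflip]
          by_cases hxa : x = t <;> by_cases hxb : x = b <;> by_cases hxc : x = c <;>
            simp_all)
    · exact card_filter_update _ _ c b (Ne.symm hbc) g3 g4
        (fun x => by
          rw [adjflip]
          by_cases hxa : x = t <;> by_cases hxb : x = b <;> by_cases hxc : x = c <;>
            simp_all)
  · by_cases htb : t = b
    · subst htb
      constructor
      · exact card_filter_update _ _ c a (Ne.symm hac) g2 g4
          (fun x => by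
            rw [adjflip]
            by_cases hxa : x = a <;> by_cases hxb : x = t <;> by_cases hxc : x = c <;>
              simp_all)
      · exact card_filter_update _ _ a c hac g1 g5
          (fun x => by
            rw [adjflip]
            by_cases hxa : x = a <;> by_cases hxb : x = t <;> by_cases hxc : x = c <;>
              simp_all)
    · by_cases htc : t = c
      · subst htc
        constructor
        · exact card_filter_update _ _ a b hab g3 g5
            (fun x => by
              rw [adjflip]
              by_cases hxa : x = a <;> by_cases hxb : x = b <;> by_cases hxc : x = t <;>
                simp_all)
        · exact card_filter_update _ _ b a (Ne.symm hab) g2 g6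
            (fun x => by
              rw [adjflip]
              by_cases hxa : x = a <;> by_cases hxb : x = b <;> by_cases hxc : x = t <;>
                simp_all)
      · constructor
        · have heq : ∀ x, (flip3 G a b c).Adj t x = G.Adj t x := fun x => by
            rw [adjflip]; simp [hta, htb, htc]
          simp only [SDigraph.outDeg, heq]
        · have heq : ∀ x, (flip3 G a b c).Adj x t = G.Adj x t := fun x => by
            rw [adjflip]; simp [hta, htb, htc]
          simp only [SDigraph.inDeg, heq]

lemma flip3_realizes [Fintype V] [DecidableEq V] {G : SDigraph V} {d : V → ℕ × ℕ}
    (u v w : V) (huv : u ≠ v) (hvw : v ≠ w) (huw : u ≠ w)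
    (hC3 : InducesC3 G u v w) (hG : Realizes G d) : Realizes (flip3 G u v w) d := by
  rcases hC3 with ⟨g1, g2, g3, g4, g5, g6⟩ | ⟨g1, g2, g3, g4, g5, g6⟩
  · intro t
    obtain ⟨h1, h2⟩ := flip3_degs_aux G u v w huv hvw huw g1 g2 g3 g4 g5 g6 t
    exact ⟨h1.trans (hG t).1, h2.trans (hG t).2⟩
  · intro t
    rw [flip3_comm]
    obtain ⟨h1, h2⟩ := flip3_degs_aux G u w v huw (Ne.symm hvw) huv g3 g2 g1 g6 g5 g4 t
    exact ⟨h1.trans (hG t).1, h2.trans (hG t).2⟩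

lemma rev_agree [DecidableEq V] {G H : SDigraph V} (h : TwoSwitch G H) :
    ∀ a b, H.Adj a b ≠ G.Adj a b → H.Adj b a = G.Adj b a := by
  obtain ⟨v₁, v₂, v₃, v₄, h12, h13, h14, h23, h24, h34, hA, hB, hC, hD, hf⟩ := h
  intro a b hne
  rw [hf a b] at hne
  rw [hf b a]
  by_cases c1 : (a = v₁ ∧ b = v₂) ∨ (a = v₃ ∧ b = v₄)
  · rcases c1 with ⟨rfl, rfl⟩ | ⟨rfl, rfl⟩ <;>
      rw [if_neg (by simp [h12, h13, h14, h23, h24, h34, Ne.symm h12, Ne.symm h13,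
          Ne.symm h14, Ne.symm h23, Ne.symm h24, Ne.symm h34]),
        if_neg (by simp [h12, h13, h14, h23, h24, h34, Ne.symm h12, Ne.symm h13,
          Ne.symm h14, Ne.symm h23, Ne.symm h24, Ne.symm h34])]
  · rw [if_neg c1] at hne
    by_cases c2 : (a = v₁ ∧ b = v₄) ∨ (a = v₃ ∧ b = v₂)
    · rcases c2 with ⟨rfl, rfl⟩ | ⟨rfl, rfl⟩ <;>
        rw [if_neg (by simp [h12, h13, h14, h23, h24, h34, Ne.symm h12, Ne.symm h13,
            Ne.symm h14, Ne.symm h23, Ne.symm h24, Ne.symm h34]),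
          if_neg (by simp [h12, h13, h14, h23, h24, h34, Ne.symm h12, Ne.symm h13,
            Ne.symm h14, Ne.symm h23, Ne.symm h24, Ne.symm h34])]
    · rw [if_neg c2] at hne
      exact absurd rfl hne

lemma agree_on_T [DecidableEq V] {G H : SDigraph V} {u v w : V}
    (huv : u ≠ v) (hvw : v ≠ w) (huw : u ≠ w)
    (hG : InducesC3 G u v w) (hH : InducesC3 H u v w)
    (hrev : ∀ a b, H.Adj a b ≠ G.Adj a b → H.Adj b a = G.Adj b a) :
    ∀ a b, (a = u ∨ a = v ∨ a = w) → (b = u ∨ b = v ∨ b = w) →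
      H.Adj a b = G.Adj a b := by
  have irrG := G.irrefl
  have irrH := H.irrefl
  rcases hG with ⟨g1, g2, g3, g4, g5, g6⟩ | ⟨g1, g2, g3, g4, g5, g6⟩ <;>
    rcases hH with ⟨k1, k2, k3, k4, k5, k6⟩ | ⟨k1, k2, k3, k4, k5, k6⟩
  · intro a b ha hb
    rcases ha with rfl | rfl | rfl <;> rcases hb with rfl | rfl | rfl <;> simp_all
  · exfalso
    have := hrev u v (by rw [k4, g1]; simp)
    rw [k1, g4] at this
    exact absurd this (by simp)
  · exfalso
    have := hrev u v (by rw [k1, g4]; simp)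
    rw [k4, g1] at this
    exact absurd this (by simp)
  · intro a b ha hb
    rcases ha with rfl | rfl | rfl <;> rcases hb with rfl | rfl | rfl <;> simp_all

lemma twoSwitch_flip [DecidableEq V] {G H : SDigraph V} {u v w : V}
    (hagree : ∀ a b, (a = u ∨ a = v ∨ a = w) → (b = u ∨ b = v ∨ b = w) →
      H.Adj a b = G.Adj a b)
    (hTS : TwoSwitch G H) :
    TwoSwitch (flip3 G u v w) (flip3 H u v w) := by
  obtain ⟨v₁, v₂, v₃, v₄, h12, h13, h14, h23, h24, h34, hA, hB, hC, hD, hf⟩ := hTS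
  have hHv12 : H.Adj v₁ v₂ = false := by rw [hf]; simp
  have hHv34 : H.Adj v₃ v₄ = false := by rw [hf]; simp
  have hHv14 : H.Adj v₁ v₄ = true := by rw [hf]; simp [h13, Ne.symm h24]
  have hHv32 : H.Adj v₃ v₂ = true := by rw [hf]; simp [Ne.symm h13, h24]
  have hp1 : ¬((v₁ = u ∨ v₁ = v ∨ v₁ = w) ∧ (v₂ = u ∨ v₂ = v ∨ v₂ = w)) := by
    rintro ⟨m1, m2⟩
    have := hagree v₁ v₂ m1 m2
    rw [hHv12, hA] at this; exact absurd this (by simp)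
  have hp2 : ¬((v₃ = u ∨ v₃ = v ∨ v₃ = w) ∧ (v₄ = u ∨ v₄ = v ∨ v₄ = w)) := by
    rintro ⟨m1, m2⟩
    have := hagree v₃ v₄ m1 m2
    rw [hHv34, hB] at this; exact absurd this (by simp)
  have hp3 : ¬((v₁ = u ∨ v₁ = v ∨ v₁ = w) ∧ (v₄ = u ∨ v₄ = v ∨ v₄ = w)) := by
    rintro ⟨m1, m2⟩
    have := hagree v₁ v₄ m1 m2
    rw [hHv14, hC] at this; exact absurd this (by simp)
  have hp4 : ¬((v₃ = u ∨ v₃ = v ∨ v₃ = w) ∧ (v₂ = u ∨ v₂ = v ∨ v₂ = w)) := by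
    rintro ⟨m1, m2⟩
    have := hagree v₃ v₂ m1 m2
    rw [hHv32, hD] at this; exact absurd this (by simp)
  refine ⟨v₁, v₂, v₃, v₄, h12, h13, h14, h23, h24, h34, ?_, ?_, ?_, ?_, ?_⟩
  · rw [adjflip, if_neg hp1]; exact hA
  · rw [adjflip, if_neg hp2]; exact hB
  · rw [adjflip, if_neg hp3]; exact hC
  · rw [adjflip, if_neg hp4]; exact hD
  · intro x y
    rw [adjflip, adjflip]
    by_cases hm : (x = u ∨ x = v ∨ x = w) ∧ (y = u ∨ y = v ∨ y = w)
    · rw [if_pos hm, if_pos hm, hagree y x hm.2 hm.1]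
      have c1 : ¬((x = v₁ ∧ y = v₂) ∨ (x = v₃ ∧ y = v₄)) := by
        rintro (⟨rfl, rfl⟩ | ⟨rfl, rfl⟩)
        · exact hp1 hm
        · exact hp2 hm
      have c2 : ¬((x = v₁ ∧ y = v₄) ∨ (x = v₃ ∧ y = v₂)) := by
        rintro (⟨rfl, rfl⟩ | ⟨rfl, rfl⟩)
        · exact hp3 hm
        · exact hp4 hm
      rw [if_neg c1, if_neg c2]
    · rw [if_neg hm, if_neg hm]
      exact hf x y

lemma reach_master [Fintype V] [DecidableEq V] {d : V → ℕ × ℕ} {u v w : V}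
    (huv : u ≠ v) (hvw : v ≠ w) (huw : u ≠ w)
    (hanchor : ∀ G : SDigraph V, Realizes G d → InducesC3 G u v w)
    {G H : SDigraph V} (hG : Realizes G d) (hR : Reach2 G H) :
    Realizes H d ∧ Reach2 (flip3 G u v w) (flip3 H u v w) ∧
      ∀ a b, (a = u ∨ a = v ∨ a = w) → (b = u ∨ b = v ∨ b = w) →
        H.Adj a b = G.Adj a b := by
  induction hR with
  | refl => exact ⟨hG, Relation.ReflTransGen.refl, fun _ _ _ _ => rfl⟩
  | @tail K H' hGK hstep ih =>
    obtain ⟨hK, hreach, hagree⟩ := ih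
    have hts : TwoSwitch K H' := hstep.elim id twoSwitch_symm
    have hH : Realizes H' d := twoSwitch_realizes hts hK
    have hagKH : ∀ a b, (a = u ∨ a = v ∨ a = w) → (b = u ∨ b = v ∨ b = w) →
        H'.Adj a b = K.Adj a b :=
      agree_on_T huv hvw huw (hanchor K hK) (hanchor H' hH) (rev_agree hts)
    have hstep' : TwoSwitch (flip3 K u v w) (flip3 H' u v w) :=
      twoSwitch_flip hagKH hts
    exact ⟨hH, hreach.tail (Or.inl hstep'),
      fun a b ha hb => (hagKH a b ha hb).trans (hagree a b ha hb)⟩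

end Aux

/-- let `d` be a digraphic sequence such that every
realization induces a directed 3-cycle on the distinct vertices `u, v, w`,
and let `σ = flip3 · u v w` be the reorientation of that 3-cycle.  Then `σ`
maps `R(d)` to `R(d)` and is an involution; realizations `G, H` differ by a
single 2-switch iff `σ G, σ H` do (so `σ` is an automorphism of `Ω'_d`);
consequently `σ` is an isomorphism between the 2-switch connected component
of `G` and that of `σ G`, and these components are disjoint
(`G` never 2-switch-reaches `σ G`). -/
theorem statement12 {V : Type} [Fintype V] [DecidableEq V] (d : V → ℕ × ℕ)
    (u v w : V) (huv : u ≠ v) (hvw : v ≠ w) (huw : u ≠ w)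
    (hd : ∃ G : SDigraph V, Realizes G d)
    (hanchor : ∀ G : SDigraph V, Realizes G d → InducesC3 G u v w) :
    (∀ G : SDigraph V, Realizes G d → Realizes (flip3 G u v w) d) ∧
    (∀ G : SDigraph V, Realizes G d → flip3 (flip3 G u v w) u v w = G) ∧
    (∀ G H : SDigraph V, Realizes G d → Realizes H d →
      (TwoSwitch G H ↔ TwoSwitch (flip3 G u v w) (flip3 H u v w))) ∧
    (∀ G H : SDigraph V, Realizes G d → Realizes H d →
      (Reach2 G H ↔ Reach2 (flip3 G u v w) (flip3 H u v w))) ∧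
    (∀ G : SDigraph V, Realizes G d → ¬ Reach2 G (flip3 G u v w)) := by
  have hflipR : ∀ G : SDigraph V, Realizes G d → Realizes (flip3 G u v w) d :=
    fun G hG => flip3_realizes u v w huv hvw huw (hanchor G hG) hG
  have hinv : ∀ G : SDigraph V, flip3 (flip3 G u v w) u v w = G :=
    fun G => flip3_flip3 G u v w
  have hTSfwd : ∀ G H : SDigraph V, Realizes G d → Realizes H d →
      TwoSwitch G H → TwoSwitch (flip3 G u v w) (flip3 H u v w) := by
    intro G H hG hH hTS
    exact twoSwitch_flip
      (agree_on_T huv hvw huw (hanchor G hG) (hanchor H hH) (rev_agree hTS)) hTS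
  refine ⟨hflipR, fun G _ => hinv G, ?_, ?_, ?_⟩
  · intro G H hG hH
    constructor
    · exact hTSfwd G H hG hH
    · intro hTS'
      have := hTSfwd _ _ (hflipR G hG) (hflipR H hH) hTS'
      rwa [hinv G, hinv H] at this
  · intro G H hG hH
    constructor
    · intro hR
      exact (reach_master huv hvw huw hanchor hG hR).2.1
    · intro hR'
      have := (reach_master huv hvw huw hanchor (hflipR G hG) hR').2.1
      rwa [hinv G, hinv H] at this
  · intro G hG hR
    obtain ⟨-, -, hagree⟩ := reach_master huv hvw huw hanchor hG hR
    have h1 := hagree u v (Or.inl rfl) (Or.inr (Or.inl rfl))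
    rw [adjflip, if_pos ⟨Or.inl rfl, Or.inr (Or.inl rfl)⟩] at h1
    rcases hanchor G hG with ⟨g1, g2, g3, g4, g5, g6⟩ | ⟨g1, g2, g3, g4, g5, g6⟩ <;>
      simp_all
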